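/- Let d ∈ ℤ_{>0} and let (Qᵢ)_{i∈ℕ} be a sequence of subsets of ℝ^d with Q_{i+1} ⊆ Qᵢ for all i, such that each Qᵢ is the convex hull of a finite subset of ℝ^d and has nonempty interior. Then there exists z ∈ ℝ^d with z ≠ 0 such that for every i there exists a real number cᵢ > 0 with cᵢ·z ∈ Qᵢ. -/

import Mathlib

open Finset

/-- The cone generated by a finset of vectors. -/
def coneOf (d : ℕ) (V : Finset (Fin d → ℝ)) : Set (Fin d → ℝ) :=
  {x | ∃ t : (Fin d → ℝ) → ℝ, (∀ v ∈ V, 0 ≤ t v) ∧ ∑ v ∈ V, t v • v = x}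

lemma isClosed_coneOf_of_li (d : ℕ) (S : Finset (Fin d → ℝ))
    (hS : LinearIndependent ℝ (fun v : {x // x ∈ S} => (v : Fin d → ℝ))) :
    IsClosed (coneOf d S) := by
  classical
  set L : ({x // x ∈ S} → ℝ) →ₗ[ℝ] (Fin d → ℝ) :=
    { toFun := fun g => ∑ v : {x // x ∈ S}, g v • (v : Fin d → ℝ)
      map_add' := by intro a b; simp [add_smul, Finset.sum_add_distrib]
      map_smul' := by intro c a; simp [smul_smul, Finset.smul_sum]
    } with hL
  have hinj : Function.Injective L := by
    intro g₁ g₂ h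
    have h0 : L (g₁ - g₂) = 0 := by rw [map_sub, h, sub_self]
    have hz : ∑ v : {x // x ∈ S}, (g₁ - g₂) v • (v : Fin d → ℝ) = 0 := h0
    have hall := Fintype.linearIndependent_iff.mp hS (g₁ - g₂) hz
    funext i
    have := hall i
    simpa [sub_eq_zero] using this
  have hemb := LinearMap.isClosedEmbedding_of_injective (f := L)
    (LinearMap.ker_eq_bot.mpr hinj)
  have horth : IsClosed {g : {x // x ∈ S} → ℝ | ∀ v, 0 ≤ g v} := by
    have : {g : {x // x ∈ S} → ℝ | ∀ v, 0 ≤ g v} = ⋂ v, {g | 0 ≤ g v} := by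
      ext g; simp [Set.mem_iInter]
    rw [this]
    exact isClosed_iInter fun v => isClosed_le continuous_const (continuous_apply v)
  have heq : coneOf d S = L '' {g | ∀ v, 0 ≤ g v} := by
    ext x
    constructor
    · rintro ⟨t, ht0, hts⟩
      refine ⟨fun v => t v, fun v => ht0 v v.2, ?_⟩
      show ∑ v : {x // x ∈ S}, t (v : Fin d → ℝ) • (v : Fin d → ℝ) = x
      rw [Finset.sum_coe_sort S (fun v => t v • v)]
      exact hts
    · rintro ⟨g, hg0, hgx⟩
      refine ⟨fun v => if h : v ∈ S then g ⟨v, h⟩ else 0, ?_, ?_⟩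
      · intro v hv
        show 0 ≤ if h : v ∈ S then g ⟨v, h⟩ else 0
        rw [dif_pos hv]; exact hg0 _
      · rw [← hgx]
        show ∑ v ∈ S, (if h : v ∈ S then g ⟨v, h⟩ else 0) • v
            = ∑ v : {x // x ∈ S}, g v • (v : Fin d → ℝ)
        have h1 : ∑ v : {x // x ∈ S}, g v • (v : Fin d → ℝ)
            = ∑ v ∈ S.attach, g v • (v : Fin d → ℝ) := rfl
        rw [h1, ← Finset.sum_attach S (fun v => (if h : v ∈ S then g ⟨v, h⟩ else 0) • v)]
        refine Finset.sum_congr rfl fun a _ => ?_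
        rw [dif_pos a.2]
  rw [heq]
  exact hemb.isClosedMap _ horth

lemma coneOf_caratheodory (d : ℕ) (V : Finset (Fin d → ℝ)) :
    ∀ x ∈ coneOf d V, ∃ S, S ⊆ V ∧
      LinearIndependent ℝ (fun v : {y // y ∈ S} => (v : Fin d → ℝ)) ∧ x ∈ coneOf d S := by
  classical
  induction V using Finset.strongInductionOn with
  | _ V ih =>
    intro x hx
    by_cases hind : LinearIndependent ℝ (fun v : {y // y ∈ V} => (v : Fin d → ℝ))
    · exact ⟨V, subset_rfl, hind, hx⟩
    obtain ⟨t, ht0, htsum⟩ := hx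
    obtain ⟨g, hgsum, i0, hgi0⟩ := Fintype.not_linearIndependent_iff.mp hind
    set G : (Fin d → ℝ) → ℝ := fun v => if h : v ∈ V then g ⟨v, h⟩ else 0 with hG
    have hGsum : ∑ v ∈ V, G v • v = 0 := by
      have h1 : ∑ v : {y // y ∈ V}, g v • (v : Fin d → ℝ)
          = ∑ v ∈ V.attach, g v • (v : Fin d → ℝ) := rfl
      rw [← Finset.sum_attach V (fun v => G v • v), ← hgsum, h1]
      refine Finset.sum_congr rfl fun a _ => ?_
      simp [hG, a.2]
    have hGne : ∃ v ∈ V, G v ≠ 0 := by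
      refine ⟨(i0 : Fin d → ℝ), i0.2, ?_⟩
      simpa [hG, i0.2] using hgi0
    have key : ∀ H : (Fin d → ℝ) → ℝ, (∑ v ∈ V, H v • v = 0) → (∃ v ∈ V, 0 < H v) →
        ∃ S, S ⊆ V ∧
          LinearIndependent ℝ (fun v : {y // y ∈ S} => (v : Fin d → ℝ)) ∧ x ∈ coneOf d S := by
      rintro H Hsum ⟨w0, hw0V, hw0pos⟩
      set P := V.filter (fun v => 0 < H v) with hP
      have hPne : P.Nonempty := ⟨w0, by simp [hP, hw0V, hw0pos]⟩
      obtain ⟨w, hwP, hwmin⟩ := Finset.exists_min_image P (fun v => t v / H v) hPne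
      have hwV : w ∈ V := (Finset.mem_filter.mp hwP).1
      have hHw : 0 < H w := (Finset.mem_filter.mp hwP).2
      set lam := t w / H w with hlam
      have hlam0 : 0 ≤ lam := div_nonneg (ht0 w hwV) hHw.le
      set t' : (Fin d → ℝ) → ℝ := fun v => t v - lam * H v with ht'
      have ht'0 : ∀ v ∈ V, 0 ≤ t' v := by
        intro v hv
        rcases le_or_gt (H v) 0 with h | h
        · have h2 : lam * H v ≤ 0 := mul_nonpos_of_nonneg_of_nonpos hlam0 h
          have := ht0 v hv
          simp only [ht']
          linarith
        · have hvP : v ∈ P := Finset.mem_filter.mpr ⟨hv, h⟩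
          have hmin := hwmin v hvP
          have h3 : lam * H v ≤ t v := by
            rw [hlam]
            calc t w / H w * H v ≤ t v / H v * H v :=
                  mul_le_mul_of_nonneg_right hmin h.le
              _ = t v := div_mul_cancel₀ _ h.ne'
          simp only [ht']; linarith
      have ht'w : t' w = 0 := by
        simp only [ht', hlam]
        field_simp
        ring
      have ht'sum : ∑ v ∈ V, t' v • v = x := by
        simp only [ht', sub_smul, Finset.sum_sub_distrib, htsum]
        have h4 : ∑ v ∈ V, (lam * H v) • v = lam • ∑ v ∈ V, H v • v := by
          rw [Finset.smul_sum]
          exact Finset.sum_congr rfl fun v _ => by rw [smul_smul]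
        rw [h4, Hsum, smul_zero, sub_zero]
      have hxmem : x ∈ coneOf d (V.erase w) := by
        refine ⟨t', fun v hv => ht'0 v (Finset.mem_of_mem_erase hv), ?_⟩
        rw [← ht'sum, ← Finset.add_sum_erase V (fun v => t' v • v) hwV]
        simp only [ht'w, zero_smul, zero_add]
      obtain ⟨S, hSsub, hSli, hxS⟩ := ih (V.erase w) (Finset.erase_ssubset hwV) x hxmem
      exact ⟨S, hSsub.trans (Finset.erase_subset _ _), hSli, hxS⟩
    rcases hGne with ⟨v0, hv0V, hv0ne⟩
    rcases hv0ne.lt_or_gt with hneg | hpos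
    · refine key (fun v => -G v) ?_ ⟨v0, hv0V, show 0 < -G v0 by linarith⟩
      simp only [neg_smul, Finset.sum_neg_distrib, hGsum, neg_zero]
    · exact key G hGsum ⟨v0, hv0V, hpos⟩

lemma isClosed_coneOf (d : ℕ) (V : Finset (Fin d → ℝ)) : IsClosed (coneOf d V) := by
  classical
  have heq : coneOf d V = ⋃ S ∈ (V.powerset.filter
      (fun S => LinearIndependent ℝ (fun v : {y // y ∈ S} => (v : Fin d → ℝ)))), coneOf d S := by
    ext x
    simp only [Set.mem_iUnion, Finset.mem_filter, Finset.mem_powerset]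
    constructor
    · intro hx
      obtain ⟨S, h1, h2, h3⟩ := coneOf_caratheodory d V x hx
      exact ⟨S, ⟨h1, h2⟩, h3⟩
    · rintro ⟨S, ⟨hSV, _⟩, t, ht0, hts⟩
      refine ⟨fun v => if v ∈ S then t v else 0, ?_, ?_⟩
      · intro v _
        show 0 ≤ if v ∈ S then t v else 0
        split_ifs with h
        · exact ht0 v h
        · exact le_refl 0
      · rw [← hts,
          ← Finset.sum_subset hSV (f := fun v => (if v ∈ S then t v else 0) • v)
            (fun v _ hv => by simp [hv])]
        exact Finset.sum_congr rfl fun v hv => by simp [hv]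
  rw [heq]
  refine Set.Finite.isClosed_biUnion (Finset.finite_toSet _) fun S hS => ?_
  have hS' := Finset.mem_coe.mp hS
  exact isClosed_coneOf_of_li d S (Finset.mem_filter.mp hS').2

lemma mem_coneOf_iff (d : ℕ) (V : Finset (Fin d → ℝ)) (u : Fin d → ℝ) (hu : u ≠ 0) :
    u ∈ coneOf d V ↔ ∃ c : ℝ, 0 < c ∧ c • u ∈ convexHull ℝ (V : Set (Fin d → ℝ)) := by
  classical
  constructor
  · rintro ⟨t, ht0, hts⟩
    set T := ∑ v ∈ V, t v with hT
    have hT0 : 0 ≤ T := Finset.sum_nonneg ht0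
    have hTne : T ≠ 0 := by
      intro h
      rw [hT] at h
      have hz : ∀ v ∈ V, t v = 0 := (Finset.sum_eq_zero_iff_of_nonneg ht0).mp h
      apply hu
      rw [← hts]
      exact Finset.sum_eq_zero fun v hv => by rw [hz v hv, zero_smul]
    have hTpos : 0 < T := lt_of_le_of_ne hT0 (Ne.symm hTne)
    refine ⟨T⁻¹, inv_pos.mpr hTpos, ?_⟩
    rw [Finset.convexHull_eq]
    refine ⟨fun v => t v / T, fun v hv => div_nonneg (ht0 v hv) hT0, ?_, ?_⟩
    · rw [← Finset.sum_div]
      exact div_self hTne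
    · rw [Finset.centerMass_eq_of_sum_1]
      · rw [← hts, Finset.smul_sum]
        exact Finset.sum_congr rfl fun v _ => by
          rw [id, smul_smul, div_eq_inv_mul]
      · rw [← Finset.sum_div]; exact div_self hTne
  · rintro ⟨c, hc, hmem⟩
    rw [Finset.convexHull_eq] at hmem
    obtain ⟨w, hw0, hw1, hwc⟩ := hmem
    refine ⟨fun v => c⁻¹ * w v, fun v hv => mul_nonneg (inv_nonneg.mpr hc.le) (hw0 v hv), ?_⟩
    have hcm : (V.centerMass w id : Fin d → ℝ) = ∑ v ∈ V, w v • v := by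
      rw [Finset.centerMass_eq_of_sum_1 _ _ hw1]; rfl
    have : ∑ v ∈ V, (c⁻¹ * w v) • v = c⁻¹ • ∑ v ∈ V, w v • v := by
      rw [Finset.smul_sum]
      exact Finset.sum_congr rfl fun v _ => by rw [smul_smul]
    rw [this, ← hcm, hwc, smul_smul, inv_mul_cancel₀ hc.ne', one_smul]

theorem common_ray_from_origin (d : ℕ) (hd : 0 < d) (Q : ℕ → Set (Fin d → ℝ))
    (hdec : ∀ i, Q (i + 1) ⊆ Q i)
    (hpoly : ∀ i, ∃ V : Finset (Fin d → ℝ), Q i = convexHull ℝ (V : Set (Fin d → ℝ)))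
    (hfull : ∀ i, (interior (Q i)).Nonempty) :
    ∃ z : Fin d → ℝ, z ≠ 0 ∧ ∀ i, ∃ c : ℝ, 0 < c ∧ c • z ∈ Q i := by
  haveI : Nonempty (Fin d) := ⟨⟨0, hd⟩⟩
  haveI : Nontrivial (Fin d → ℝ) := inferInstance
  choose V hV using hpoly
  set K : ℕ → Set (Fin d → ℝ) :=
    fun i => Metric.sphere (0 : Fin d → ℝ) 1 ∩ coneOf d (V i) with hK
  have hchar : ∀ i (u : Fin d → ℝ), u ≠ 0 →
      (u ∈ coneOf d (V i) ↔ ∃ c : ℝ, 0 < c ∧ c • u ∈ Q i) := by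
    intro i u hu
    rw [hV i]
    exact mem_coneOf_iff d (V i) u hu
  -- nonzero element of each Q i
  have hne : ∀ i, ∃ x ∈ Q i, x ≠ 0 := by
    intro i
    obtain ⟨y, hy⟩ := hfull i
    by_cases hy0 : y = 0
    · rw [hy0] at hy
      obtain ⟨ε, hε, hball⟩ := Metric.isOpen_iff.mp isOpen_interior 0 hy
      obtain ⟨w, hw⟩ := exists_ne (0 : Fin d → ℝ)
      have hwn : 0 < ‖w‖ := norm_pos_iff.mpr hw
      refine ⟨(ε / 2 / ‖w‖) • w, ?_, ?_⟩
      · apply interior_subset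
        apply hball
        rw [Metric.mem_ball, dist_zero_right, norm_smul, Real.norm_eq_abs,
          abs_of_pos (by positivity)]
        rw [div_mul_cancel₀ _ hwn.ne']
        linarith
      · intro h
        have := smul_eq_zero.mp h
        rcases this with h1 | h1
        · have : (0:ℝ) < ε / 2 / ‖w‖ := by positivity
          linarith [this.ne' h1]
        · exact hw h1
    · exact ⟨y, interior_subset hy, hy0⟩
  have hKne : ∀ i, (K i).Nonempty := by
    intro i
    obtain ⟨x, hxQ, hx0⟩ := hne i
    have hxn : 0 < ‖x‖ := norm_pos_iff.mpr hx0
    refine ⟨‖x‖⁻¹ • x, ?_, ?_⟩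
    · rw [Metric.mem_sphere, dist_zero_right, norm_smul, norm_inv, norm_norm,
        inv_mul_cancel₀ hxn.ne']
    · have hu0 : ‖x‖⁻¹ • x ≠ 0 := by
        rw [← norm_ne_zero_iff, norm_smul, norm_inv, norm_norm, inv_mul_cancel₀ hxn.ne']
        exact one_ne_zero
      rw [hchar i _ hu0]
      exact ⟨‖x‖, hxn, by rw [smul_smul, mul_inv_cancel₀ hxn.ne', one_smul]; exact hxQ⟩
  have hsub : ∀ i, K i ⊆ Metric.sphere (0 : Fin d → ℝ) 1 := fun i => Set.inter_subset_left
  have hne0 : ∀ u ∈ Metric.sphere (0 : Fin d → ℝ) 1, u ≠ 0 := by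
    intro u hu
    rw [Metric.mem_sphere, dist_zero_right] at hu
    rw [← norm_ne_zero_iff, hu]; exact one_ne_zero
  have hKdec : ∀ i, K (i + 1) ⊆ K i := by
    intro i u hu
    have hu0 : u ≠ 0 := hne0 u (hsub _ hu)
    refine ⟨hu.1, ?_⟩
    rw [hchar i u hu0]
    obtain ⟨c, hc, hcu⟩ := (hchar (i + 1) u hu0).mp hu.2
    exact ⟨c, hc, hdec i hcu⟩
  have hKcl : ∀ i, IsClosed (K i) :=
    fun i => Metric.isClosed_sphere.inter (isClosed_coneOf d (V i))
  have hKcpt : IsCompact (K 0) :=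
    (isCompact_sphere (0 : Fin d → ℝ) 1).inter_right (isClosed_coneOf d (V 0))
  obtain ⟨u, hu⟩ := IsCompact.nonempty_iInter_of_sequence_nonempty_isCompact_isClosed
    K hKdec hKne hKcpt hKcl
  have humem : ∀ i, u ∈ K i := by
    intro i; exact Set.mem_iInter.mp hu i
  have hu0 : u ≠ 0 := hne0 u (hsub 0 (humem 0))
  exact ⟨u, hu0, fun i => (hchar i u hu0).mp (humem i).2⟩
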